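/- Let G be a finite group, A ⊆ G a subset, and ρ a nontrivial irreducible unitary representation of G of dimension d_ρ ≥ d_min, where d_min is the minimal dimension of a nontrivial irreducible representation of G. Then the operator norm of F(A)(ρ) = Σ_{a∈A} ρ(a) satisfies ‖F(A)(ρ)‖_op ≤ (|A|·|G|/d_min)^{1/2}. -/

import Mathlib

open Matrix

lemma schur_aux {n : ℕ} (hn : 0 < n) {G : Type*} [Group G]
    (ρ : G →* Matrix (Fin n) (Fin n) ℂ)
    (hirr : ∀ W : Submodule ℂ (Fin n → ℂ),
      (∀ g : G, ∀ v ∈ W, (ρ g).mulVec v ∈ W) → W = ⊥ ∨ W = ⊤)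
    (T : Matrix (Fin n) (Fin n) ℂ) (hT : ∀ g, ρ g * T = T * ρ g) :
    ∃ c : ℂ, T = c • (1 : Matrix (Fin n) (Fin n) ℂ) := by
  haveI : Nonempty (Fin n) := ⟨⟨0, hn⟩⟩
  haveI : Nontrivial (Fin n → ℂ) := inferInstance
  let f : Module.End ℂ (Fin n → ℂ) := Matrix.mulVecLin T
  obtain ⟨c, hc⟩ := Module.End.exists_eigenvalue f
  refine ⟨c, ?_⟩
  have hW : ∀ g : G, ∀ v ∈ f.eigenspace c,
      (ρ g).mulVec v ∈ f.eigenspace c := by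
    intro g v hv
    rw [Module.End.mem_eigenspace_iff] at hv ⊢
    have hv' : T.mulVec v = c • v := hv
    show T.mulVec ((ρ g).mulVec v) = c • (ρ g).mulVec v
    rw [Matrix.mulVec_mulVec, ← hT g, ← Matrix.mulVec_mulVec, hv',
      Matrix.mulVec_smul]
  rcases hirr _ hW with h | h
  · exact absurd h hc
  · have hall : ∀ v : Fin n → ℂ, T.mulVec v = c • v := by
      intro v
      have : v ∈ f.eigenspace c := h ▸ Submodule.mem_top
      rwa [Module.End.mem_eigenspace_iff] at this
    ext i j
    have := congrFun (hall (Pi.single j 1)) i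
    rw [Matrix.mulVec_single] at this
    simp only [Pi.smul_apply, MulOpposite.op_one, one_smul, Matrix.col, Matrix.transpose_apply, mul_one] at this
    rw [this]
    by_cases hij : i = j <;>
      simp [hij, Matrix.one_apply, Pi.single_apply, eq_comm]
open Matrix

lemma unit_aux {n : ℕ} {G : Type*} [Group G]
    (ρ : G →* Matrix (Fin n) (Fin n) ℂ)
    (hunit : ∀ g : G, (ρ g)ᴴ * ρ g = 1) (g : G) :
    (ρ g)ᴴ = ρ g⁻¹ := by
  have h1 : ρ g * ρ g⁻¹ = 1 := by rw [← _root_.map_mul, mul_inv_cancel, _root_.map_one]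
  calc (ρ g)ᴴ = (ρ g)ᴴ * (ρ g * ρ g⁻¹) := by rw [h1, mul_one]
    _ = ((ρ g)ᴴ * ρ g) * ρ g⁻¹ := by rw [mul_assoc]
    _ = ρ g⁻¹ := by rw [hunit, one_mul]

lemma sandwich_aux {n : ℕ} (M N : Matrix (Fin n) (Fin n) ℂ) (i j k l : Fin n) :
    (M * Matrix.single k l (1:ℂ) * N) i j = M i k * N l j := by
  rw [Matrix.mul_apply, Finset.sum_eq_single l]
  · rw [Matrix.mul_single_apply_same, mul_one]
  · intro q _ hq
    rw [Matrix.mul_single_apply_of_ne (c := 1) k l i q hq M, zero_mul]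
  · simp

lemma orth_aux {n : ℕ} (hn : 0 < n) {G : Type*} [Group G] [Fintype G]
    (ρ : G →* Matrix (Fin n) (Fin n) ℂ)
    (hunit : ∀ g : G, (ρ g)ᴴ * ρ g = 1)
    (hirr : ∀ W : Submodule ℂ (Fin n → ℂ),
      (∀ g : G, ∀ v ∈ W, (ρ g).mulVec v ∈ W) → W = ⊥ ∨ W = ⊤)
    (i j k l : Fin n) :
    ∑ g : G, ρ g i k * (starRingEnd ℂ) (ρ g j l) =
      ((Fintype.card G : ℂ) / n) * (if k = l then 1 else 0) *
        (if i = j then 1 else 0) := by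
  classical
  set E : Matrix (Fin n) (Fin n) ℂ := Matrix.single k l 1 with hE
  set S : Matrix (Fin n) (Fin n) ℂ := ∑ g : G, ρ g * E * (ρ g)ᴴ with hS
  -- S commutes with ρ
  have hrr : ∀ g : G, ρ g * (ρ g)ᴴ = 1 := by
    intro g
    rw [unit_aux ρ hunit, ← _root_.map_mul, mul_inv_cancel, _root_.map_one]
  have hcomm : ∀ h : G, ρ h * S = S * ρ h := by
    intro h
    have key : ρ h * S * (ρ h)ᴴ = S := by
      rw [hS, Finset.mul_sum, Finset.sum_mul]
      refine Fintype.sum_equiv (Equiv.mulLeft h) _ _ ?_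
      intro g
      simp only [Equiv.coe_mulLeft, _root_.map_mul, conjTranspose_mul]
      noncomm_ring
    calc ρ h * S = ρ h * S * ((ρ h)ᴴ * ρ h) := by rw [hunit, mul_one]
      _ = (ρ h * S * (ρ h)ᴴ) * ρ h := by noncomm_ring
      _ = S * ρ h := by rw [key]
  obtain ⟨c, hc⟩ := schur_aux hn ρ hirr S hcomm
  -- trace of S
  have htrE : E.trace = if k = l then 1 else 0 := by
    rw [hE, Matrix.trace]
    simp only [Matrix.diag, Matrix.single, Matrix.of_apply, ite_and]
    rw [Finset.sum_ite_eq]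
    simp [eq_comm]
  have htrS : S.trace = (Fintype.card G : ℂ) * (if k = l then 1 else 0) := by
    rw [hS, Matrix.trace_sum]
    have : ∀ g : G, (ρ g * E * (ρ g)ᴴ).trace = E.trace := by
      intro g
      rw [Matrix.trace_mul_comm, ← mul_assoc, hunit, one_mul]
    by_cases hkl : k = l <;> simp [this, htrE, hkl, Finset.sum_const]
  have htrc : S.trace = c * n := by
    rw [hc]; simp [Matrix.trace_smul, Matrix.trace_one, mul_comm]
  have hcval : c = (Fintype.card G : ℂ) / n * (if k = l then 1 else 0) := by
    have hn' : (n : ℂ) ≠ 0 := Nat.cast_ne_zero.mpr hn.ne'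
    rw [htrS] at htrc
    by_cases hkl : k = l
    · simp only [hkl, if_true, mul_one] at htrc ⊢
      rw [eq_div_iff hn']
      exact htrc.symm
    · simp only [hkl, if_false, mul_zero] at htrc ⊢
      rcases mul_eq_zero.mp htrc.symm with h | h
      · exact h
      · exact absurd h hn'
  -- entries of S
  have hent : S i j = ∑ g : G, ρ g i k * (starRingEnd ℂ) (ρ g j l) := by
    rw [hS, Matrix.sum_apply]
    refine Finset.sum_congr rfl fun g _ => ?_
    rw [hE, sandwich_aux, conjTranspose_apply, starRingEnd_apply]
  rw [← hent, hc, hcval, Matrix.smul_apply, Matrix.one_apply, smul_eq_mul]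


set_option maxHeartbeats 1000000 in
/-- Operator norm bound for the Fourier transform of a set at a nontrivial
irreducible unitary representation: `‖F(A)(ρ)‖_op ≤ √(|A|·|G|/d_min)`, where
`d_min` is the minimal dimension of a nontrivial irreducible unitary
representation of `G`. -/
theorem opNorm_fourier_le {G : Type*} [Group G] [Fintype G] [DecidableEq G]
    (A : Finset G) (dmin : ℕ) (hdminpos : 0 < dmin)
    (hdmin : ∀ (m : ℕ) (π : G →* Matrix (Fin m) (Fin m) ℂ),
      (∀ g : G, (π g)ᴴ * π g = 1) →
      (∀ W : Submodule ℂ (Fin m → ℂ),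
        (∀ g : G, ∀ v ∈ W, (π g).mulVec v ∈ W) → W = ⊥ ∨ W = ⊤) →
      (∃ g : G, π g ≠ 1) → dmin ≤ m)
    (n : ℕ) (ρ : G →* Matrix (Fin n) (Fin n) ℂ)
    (hunit : ∀ g : G, (ρ g)ᴴ * ρ g = 1)
    (hirr : ∀ W : Submodule ℂ (Fin n → ℂ),
      (∀ g : G, ∀ v ∈ W, (ρ g).mulVec v ∈ W) → W = ⊥ ∨ W = ⊤)
    (hnontriv : ∃ g : G, ρ g ≠ 1) :
    ∀ v : EuclideanSpace ℂ (Fin n),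
      ‖Matrix.toEuclideanLin (∑ a ∈ A, ρ a) v‖ ≤
        Real.sqrt (A.card * Fintype.card G / dmin) * ‖v‖ := by
  classical
  intro v
  have hdn : dmin ≤ n := hdmin n ρ hunit hirr hnontriv
  have hnpos : 0 < n := lt_of_lt_of_le hdminpos hdn
  have hGpos : 0 < Fintype.card G := Fintype.card_pos
  set M : Matrix (Fin n) (Fin n) ℂ := ∑ a ∈ A, ρ a with hM
  set cG : ℝ := (Fintype.card G : ℝ) with hcG
  have hcGpos : 0 < cG := by positivity
  have hnR : (0:ℝ) < n := by exact_mod_cast hnpos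
  -- the orthonormal family of matrix coefficients
  set s : ℝ := Real.sqrt ((n : ℝ) / cG) with hs
  have hsnn : 0 ≤ s := Real.sqrt_nonneg _
  have hs2 : (s:ℂ) * (s:ℂ) = ((n : ℂ) / (cG:ℂ)) := by
    rw [← Complex.ofReal_mul, Real.mul_self_sqrt (by positivity)]
    push_cast
    norm_num
  set e : Fin n × Fin n → EuclideanSpace ℂ G :=
    fun p => (WithLp.equiv 2 (G → ℂ)).symm
      (fun g => (s : ℂ) * (starRingEnd ℂ) (ρ g p.1 p.2)) with he
  have hinner : ∀ p q : Fin n × Fin n, (inner ℂ (e p) (e q) : ℂ) =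
      if p = q then 1 else 0 := by
    intro p q
    have : (inner ℂ (e p) (e q) : ℂ) =
        ∑ g : G, ((s:ℂ) * ρ g p.1 p.2) * ((s:ℂ) * (starRingEnd ℂ) (ρ g q.1 q.2)) := by
      rw [PiLp.inner_apply]
      refine Finset.sum_congr rfl fun g _ => ?_
      simp only [he, WithLp.equiv_symm_apply, PiLp.toLp_apply, RCLike.inner_apply, _root_.map_mul,
        Complex.conj_ofReal, Complex.conj_conj]
      ring
    rw [this]
    have : ∑ g : G, ((s:ℂ) * ρ g p.1 p.2) * ((s:ℂ) * (starRingEnd ℂ) (ρ g q.1 q.2)) =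
        ((s:ℂ) * (s:ℂ)) * ∑ g : G, ρ g p.1 p.2 * (starRingEnd ℂ) (ρ g q.1 q.2) := by
      rw [Finset.mul_sum]
      exact Finset.sum_congr rfl fun g _ => by ring
    rw [this, orth_aux hnpos ρ hunit hirr p.1 q.1 p.2 q.2, hs2]
    have hne1 : ((n:ℂ)) ≠ 0 := Nat.cast_ne_zero.mpr hnpos.ne'
    have hne2 : ((cG:ℂ)) ≠ 0 := by
      simp only [hcG]
      exact_mod_cast Nat.cast_ne_zero.mpr hGpos.ne'
    have hcoef : (n : ℂ) / (cG:ℂ) * ((Fintype.card G : ℂ) / (n:ℂ)) = 1 := by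
      rw [hcG]
      push_cast
      field_simp
    by_cases h2 : p.2 = q.2
    · by_cases h1 : p.1 = q.1
      · have hpq : p = q := Prod.ext h1 h2
        rw [if_pos h2, if_pos h1, if_pos hpq, mul_one, mul_one]
        exact hcoef
      · have hpq : p ≠ q := fun h => h1 (by rw [h])
        rw [if_neg h1, if_neg hpq, mul_zero, mul_zero]
    · have hpq : p ≠ q := fun h => h2 (by rw [h])
      rw [if_neg h2, if_neg hpq, mul_zero, zero_mul, mul_zero]
  have honb : Orthonormal ℂ e := by
    rw [orthonormal_iff_ite]
    exact hinner
  -- indicator vector of A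
  set x : EuclideanSpace ℂ G := (WithLp.equiv 2 (G → ℂ)).symm
    (fun g => if g ∈ A then (1:ℂ) else 0) with hx
  have hxnorm : ‖x‖ ^ 2 = (A.card : ℝ) := by
    rw [EuclideanSpace.norm_eq, Real.sq_sqrt (by positivity)]
    have : ∀ g : G, ‖x g‖ ^ 2 = if g ∈ A then (1:ℝ) else 0 := by
      intro g
      by_cases hg : g ∈ A <;> simp [hx, WithLp.equiv_symm_apply, PiLp.toLp_apply, hg]
    simp only [this, Finset.sum_ite_mem, Finset.univ_inter, Finset.sum_const,
      nsmul_eq_mul, mul_one]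
  have hex : ∀ p : Fin n × Fin n, (inner ℂ (e p) x : ℂ) = (s:ℂ) * M p.1 p.2 := by
    intro p
    rw [PiLp.inner_apply]
    have : ∀ g : G, (inner ℂ (e p g) (x g) : ℂ) =
        if g ∈ A then (s:ℂ) * ρ g p.1 p.2 else 0 := by
      intro g
      simp only [he, hx, WithLp.equiv_symm_apply, PiLp.toLp_apply, RCLike.inner_apply, _root_.map_mul,
        Complex.conj_ofReal]
      by_cases hg : g ∈ A <;> simp [hg, Complex.conj_conj]
    simp only [this, Finset.sum_ite_mem, Finset.univ_inter]
    rw [← Finset.mul_sum, hM, Matrix.sum_apply]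
  -- Bessel
  have hbessel := Orthonormal.sum_inner_products_le (s := (Finset.univ : Finset (Fin n × Fin n))) x honb
  have hHS : ∑ p : Fin n × Fin n, ‖M p.1 p.2‖ ^ 2 ≤ (A.card : ℝ) * cG / n := by
    have hterm : ∀ p : Fin n × Fin n, ‖(inner ℂ (e p) x : ℂ)‖ ^ 2 =
        ((n:ℝ)/cG) * ‖M p.1 p.2‖ ^ 2 := by
      intro p
      rw [hex p, norm_mul, mul_pow, Complex.norm_real, Real.norm_of_nonneg hsnn,
        hs, Real.sq_sqrt (by positivity)]
    rw [hxnorm] at hbessel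
    simp only [hterm, ← Finset.mul_sum] at hbessel
    rw [← le_div_iff₀' (by positivity)] at hbessel
    calc ∑ p : Fin n × Fin n, ‖M p.1 p.2‖ ^ 2 ≤ (A.card : ℝ) / ((n:ℝ)/cG) := hbessel
      _ = (A.card : ℝ) * cG / n := by field_simp
  -- row-wise Cauchy-Schwarz
  have hrow : ‖Matrix.toEuclideanLin M v‖ ^ 2 ≤
      (∑ p : Fin n × Fin n, ‖M p.1 p.2‖ ^ 2) * ‖v‖ ^ 2 := by
    rw [EuclideanSpace.norm_eq, Real.sq_sqrt (by positivity)]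
    have hcomp : ∀ i : Fin n, ‖(Matrix.toEuclideanLin M v) i‖ ^ 2 ≤
        (∑ j : Fin n, ‖M i j‖ ^ 2) * ‖v‖ ^ 2 := by
      intro i
      set w : EuclideanSpace ℂ (Fin n) := (WithLp.equiv 2 (Fin n → ℂ)).symm
        (fun j => (starRingEnd ℂ) (M i j)) with hw
      have h1 : (Matrix.toEuclideanLin M v) i = inner ℂ w v := by
        rw [Matrix.toEuclideanLin_apply, PiLp.inner_apply]
        simp only [hw, WithLp.equiv_symm_apply, PiLp.toLp_apply, RCLike.inner_apply,
          Complex.conj_conj, WithLp.equiv_symm_apply, PiLp.toLp_apply]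
        show ∑ j, M i j * v.ofLp j = _
        exact Finset.sum_congr rfl fun j _ => mul_comm _ _
      have h2 : ‖(inner ℂ w v : ℂ)‖ ≤ ‖w‖ * ‖v‖ := norm_inner_le_norm w v
      have h3 : ‖w‖ ^ 2 = ∑ j : Fin n, ‖M i j‖ ^ 2 := by
        rw [EuclideanSpace.norm_eq, Real.sq_sqrt (by positivity)]
        refine Finset.sum_congr rfl fun j _ => ?_
        simp [hw, WithLp.equiv_symm_apply, PiLp.toLp_apply]
      calc ‖(Matrix.toEuclideanLin M v) i‖ ^ 2 = ‖(inner ℂ w v : ℂ)‖ ^ 2 := by rw [h1]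
        _ ≤ (‖w‖ * ‖v‖) ^ 2 := by
            apply pow_le_pow_left₀ (norm_nonneg _) h2
        _ = ‖w‖ ^ 2 * ‖v‖ ^ 2 := by ring
        _ = (∑ j : Fin n, ‖M i j‖ ^ 2) * ‖v‖ ^ 2 := by rw [h3]
    calc ∑ i : Fin n, ‖(Matrix.toEuclideanLin M v) i‖ ^ 2
        ≤ ∑ i : Fin n, (∑ j : Fin n, ‖M i j‖ ^ 2) * ‖v‖ ^ 2 :=
          Finset.sum_le_sum fun i _ => hcomp i
      _ = (∑ p : Fin n × Fin n, ‖M p.1 p.2‖ ^ 2) * ‖v‖ ^ 2 := by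
          rw [Fintype.sum_prod_type, Finset.sum_mul]
  -- combine
  have hfinal : ‖Matrix.toEuclideanLin M v‖ ^ 2 ≤
      ((A.card : ℝ) * cG / dmin) * ‖v‖ ^ 2 := by
    calc ‖Matrix.toEuclideanLin M v‖ ^ 2
        ≤ (∑ p : Fin n × Fin n, ‖M p.1 p.2‖ ^ 2) * ‖v‖ ^ 2 := hrow
      _ ≤ ((A.card : ℝ) * cG / n) * ‖v‖ ^ 2 :=
          mul_le_mul_of_nonneg_right hHS (sq_nonneg _)
      _ ≤ ((A.card : ℝ) * cG / dmin) * ‖v‖ ^ 2 := by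
          have hdmR : (0:ℝ) < (dmin : ℝ) := by exact_mod_cast hdminpos
          have hdnR : (dmin : ℝ) ≤ (n : ℝ) := by exact_mod_cast hdn
          have hAcG : (0:ℝ) ≤ (A.card : ℝ) * cG :=
            mul_nonneg (Nat.cast_nonneg _) hcGpos.le
          exact mul_le_mul_of_nonneg_right
            (div_le_div_of_nonneg_left hAcG hdmR hdnR) (sq_nonneg _)
  have h0 : (0:ℝ) ≤ (A.card : ℝ) * cG / dmin := by positivity
  calc ‖Matrix.toEuclideanLin M v‖
      = Real.sqrt (‖Matrix.toEuclideanLin M v‖ ^ 2) := (Real.sqrt_sq (norm_nonneg _)).symm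
    _ ≤ Real.sqrt (((A.card : ℝ) * cG / dmin) * ‖v‖ ^ 2) := Real.sqrt_le_sqrt hfinal
    _ = Real.sqrt ((A.card : ℝ) * cG / dmin) * ‖v‖ := by
        rw [Real.sqrt_mul h0, Real.sqrt_sq (norm_nonneg _)]
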